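/- For any fixed finite poset P and any fixed k ≥ 2, for all sufficiently large n, every family A ⊆ 2^[n] not containing P as a weak subposet satisfies |A| ≤ (1/2^{k−1})(|P| + (3k−5)·2^{k−2}(h(P)−1) − 1) · C(n, ⌊n/2⌋). -/

import Mathlib

/-- A family `𝒜 ⊆ 2^[n]` contains the poset `P` as a weak subposet. -/
def containsWeak {n : ℕ} (𝒜 : Finset (Finset (Fin n))) (P : Type*) [PartialOrder P] : Prop :=
  ∃ φ : P → Finset (Fin n), Function.Injective φ ∧ (∀ x, φ x ∈ 𝒜) ∧
    ∀ x y : P, x ≤ y → φ x ⊆ φ y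

/-- `h` is the height of the poset `P`: the maximum size of a chain in `P`. -/
def isHeight (P : Type*) [PartialOrder P] (h : ℕ) : Prop :=
  (∃ s : Finset P, IsChain (· ≤ ·) (s : Set P) ∧ s.card = h) ∧
  ∀ s : Finset P, IsChain (· ≤ ·) (s : Set P) → s.card ≤ h


open Finset

namespace GMTaux

lemma sum_two_pow (m : ℕ) : ∑ i ∈ Finset.range m, 2 ^ i = 2 ^ m - 1 := by
  induction m with
  | zero => simp
  | succ m ih =>
      rw [Finset.sum_range_succ, ih, pow_succ]
      have : 1 ≤ 2 ^ m := Nat.one_le_two_pow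
      omega

lemma card_fin_lt (m c : ℕ) :
    ((univ : Finset (Fin m)).filter (fun s : Fin m => (s : ℕ) < c)).card = min c m := by
  have himg : ((univ : Finset (Fin m)).filter (fun s : Fin m => (s : ℕ) < c)).image Fin.val
      = Finset.range (min c m) := by
    ext i
    simp only [mem_image, mem_filter, mem_univ, true_and, mem_range]
    constructor
    · rintro ⟨a, ha, rfl⟩; exact lt_min ha a.isLt
    · intro hi
      exact ⟨⟨i, lt_of_lt_of_le hi (min_le_right _ _)⟩, lt_of_lt_of_le hi (min_le_left _ _), rfl⟩
  calc ((univ : Finset (Fin m)).filter (fun s : Fin m => (s : ℕ) < c)).card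
      = (((univ : Finset (Fin m)).filter (fun s : Fin m => (s : ℕ) < c)).image Fin.val).card :=
        (Finset.card_image_of_injective _ Fin.val_injective).symm
    _ = min c m := by rw [himg, Finset.card_range]

lemma card_filter_exists (m c : ℕ) :
    ((univ : Finset (Finset (Fin m))).filter (fun R : Finset (Fin m) => ∃ s ∈ R, c ≤ (s : ℕ) + 1)).card
      = 2 ^ m - 2 ^ (min (c - 1) m) := by
  classical
  have hneg : ((univ : Finset (Finset (Fin m))).filter
        (fun R : Finset (Fin m) => ¬ ∃ s ∈ R, c ≤ (s : ℕ) + 1))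
      = ((univ : Finset (Fin m)).filter (fun s : Fin m => (s : ℕ) < c - 1)).powerset := by
    ext R
    simp only [mem_filter, mem_univ, true_and, mem_powerset, not_exists, not_and]
    constructor
    · intro hR s hs
      have h2 := hR s hs
      simp only [mem_filter, mem_univ, true_and]
      omega
    · intro hR s hs
      have h2 : (s : ℕ) < c - 1 := by
        have h3 := hR hs
        simp only [mem_filter, mem_univ, true_and] at h3
        exact h3
      omega
  have htot := Finset.card_filter_add_card_filter_not
    (s := (univ : Finset (Finset (Fin m)))) (p := fun R : Finset (Fin m) => ∃ s ∈ R, c ≤ (s : ℕ) + 1)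
  rw [hneg] at htot
  have h1 : ((univ : Finset (Fin m)).filter (fun s : Fin m => (s : ℕ) < c - 1)).powerset.card
      = 2 ^ (min (c-1) m) := by
    rw [Finset.card_powerset, card_fin_lt]
  have h2 : (univ : Finset (Finset (Fin m))).card = 2 ^ m := by
    simp [Finset.card_univ]
  have hle : 2 ^ (min (c-1) m) ≤ 2 ^ m := Nat.pow_le_pow_right (by norm_num) (min_le_right _ _)
  omega

end GMTaux
section ChainSec

variable {n : ℕ} (E : ℕ → Finset (Fin n))

/-- A "nice chain": monotone with card `min i n`. -/
def NiceC : Prop := Monotone E ∧ ∀ i, (E i).card = min i n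

/-- membership in the `k`-interval chain determined by `E`. -/
def memIC (k : ℕ) (G : Finset (Fin n)) : Prop :=
  ∃ i, i + k ≤ n ∧ E i ⊆ G ∧ G ⊆ E (i + k)

noncomputable def tIdx (G : Finset (Fin n)) : ℕ := sInf {j | G ⊆ E j}

noncomputable def bIdx (G : Finset (Fin n)) : ℕ := sSup {i | i ≤ n ∧ E i ⊆ G}

noncomputable def lev (a : Fin n) : ℕ := sInf {j | a ∈ E j}

variable {E}

lemma NiceC.E_univ (hE : NiceC E) {i : ℕ} (hi : n ≤ i) : E i = Finset.univ := by
  apply Finset.eq_univ_of_card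
  rw [hE.2 i, Fintype.card_fin]
  omega

lemma NiceC.E_zero (hE : NiceC E) : E 0 = ∅ := by
  have := hE.2 0
  simp only [Nat.min_eq_left (Nat.zero_le n)] at this
  exact Finset.card_eq_zero.mp (by omega)

variable (G : Finset (Fin n)) (a : Fin n)

lemma tIdx_mem_aux (hE : NiceC E) : G ⊆ E n := by
  rw [hE.E_univ le_rfl]; exact Finset.subset_univ G

lemma tIdx_spec (hE : NiceC E) : G ⊆ E (tIdx E G) :=
  Nat.sInf_mem (⟨n, tIdx_mem_aux G hE⟩ : {j | G ⊆ E j}.Nonempty)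

lemma tIdx_le {j : ℕ} (h : G ⊆ E j) : tIdx E G ≤ j := Nat.sInf_le h

lemma tIdx_le_n (hE : NiceC E) : tIdx E G ≤ n := tIdx_le G (tIdx_mem_aux G hE)

lemma subset_of_tIdx_le (hE : NiceC E) {j : ℕ} (h : tIdx E G ≤ j) : G ⊆ E j :=
  (tIdx_spec G hE).trans (hE.1 h)

lemma bIdx_nonempty (hE : NiceC E) : ({i | i ≤ n ∧ E i ⊆ G} : Set ℕ).Nonempty :=
  ⟨0, Nat.zero_le n, by rw [hE.E_zero]; exact Finset.empty_subset G⟩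

lemma bIdx_bdd : BddAbove {i | i ≤ n ∧ E i ⊆ G} := ⟨n, fun i hi => hi.1⟩

lemma bIdx_spec (hE : NiceC E) : bIdx E G ≤ n ∧ E (bIdx E G) ⊆ G :=
  Nat.sSup_mem (bIdx_nonempty G hE) (bIdx_bdd G)

lemma le_bIdx {i : ℕ} (hi : i ≤ n) (h : E i ⊆ G) : i ≤ bIdx E G :=
  le_csSup (bIdx_bdd G) ⟨hi, h⟩

lemma E_subset_iff (hE : NiceC E) {p : ℕ} (hp : p ≤ n) : E p ⊆ G ↔ p ≤ bIdx E G := by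
  constructor
  · exact le_bIdx G hp
  · intro h
    exact (hE.1 h).trans (bIdx_spec G hE).2

lemma bIdx_le_tIdx (hE : NiceC E) : bIdx E G ≤ tIdx E G := by
  have h1 : E (bIdx E G) ⊆ E (tIdx E G) := (bIdx_spec G hE).2.trans (tIdx_spec G hE)
  have h2 := hE.2 (bIdx E G)
  have h3 := hE.2 (tIdx E G)
  have h4 := Finset.card_le_card h1
  have h5 := (bIdx_spec G hE).1
  omega

lemma memIC_subset (hE : NiceC E) {k : ℕ} (h : memIC E k G) : G ⊆ E (bIdx E G + k) := by
  obtain ⟨i, hik, hiG, hGi⟩ := h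
  have h2 : i ≤ bIdx E G := le_bIdx G (by omega) hiG
  exact hGi.trans (hE.1 (by omega))

lemma tIdx_le_bIdx_add (hE : NiceC E) {k : ℕ} (h : memIC E k G) : tIdx E G ≤ bIdx E G + k :=
  tIdx_le G (memIC_subset G hE h)

lemma lev_nonempty (hE : NiceC E) : ({j | a ∈ E j} : Set ℕ).Nonempty :=
  ⟨n, show a ∈ E n by rw [hE.E_univ le_rfl]; exact Finset.mem_univ a⟩

lemma lev_spec (hE : NiceC E) : a ∈ E (lev E a) := Nat.sInf_mem (lev_nonempty a hE)

lemma lev_le {j : ℕ} (h : a ∈ E j) : lev E a ≤ j := Nat.sInf_le h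

lemma lev_le_n (hE : NiceC E) : lev E a ≤ n :=
  lev_le a (show a ∈ E n by rw [hE.E_univ le_rfl]; exact Finset.mem_univ a)

lemma mem_iff_lev_le (hE : NiceC E) {j : ℕ} : a ∈ E j ↔ lev E a ≤ j := by
  constructor
  · exact lev_le a
  · intro h; exact hE.1 h (lev_spec a hE)

lemma lev_pos (hE : NiceC E) : 1 ≤ lev E a := by
  by_contra hc
  have h1 : a ∈ E 0 := hE.1 (by omega) (lev_spec a hE)
  rw [hE.E_zero] at h1
  exact absurd h1 (Finset.notMem_empty a)

lemma not_mem_of_lt_lev {j : ℕ} (h : j < lev E a) : a ∉ E j := by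
  intro hmem
  exact absurd (lev_le a hmem) (by omega)

lemma E_diff_card (hE : NiceC E) (j : ℕ) : (E (j+1) \ E j).card ≤ 1 := by
  rw [Finset.card_sdiff_of_subset (hE.1 (Nat.le_add_right j 1))]
  have h1 := hE.2 j
  have h2 := hE.2 (j+1)
  omega

/-- at most one element at each level -/
lemma eq_of_lev_eq (hE : NiceC E) {a a' : Fin n} (h : lev E a = lev E a') : a = a' := by
  set l := lev E a with hl
  have h1 : a ∈ E l \ E (l - 1) := by
    rw [Finset.mem_sdiff]
    exact ⟨lev_spec a hE, not_mem_of_lt_lev a (by have := lev_pos a hE; omega)⟩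
  have h1' : a' ∈ E l \ E (l - 1) := by
    rw [Finset.mem_sdiff, h]
    exact ⟨lev_spec a' hE, not_mem_of_lt_lev a' (by have h3 := lev_pos a' hE; omega)⟩
  have hcard : (E l \ E (l-1)).card ≤ 1 := by
    have h4 := E_diff_card hE (l - 1)
    have hlp : l - 1 + 1 = l := by have := lev_pos a hE; omega
    rwa [hlp] at h4
  exact Finset.card_le_one.mp hcard a h1 a' h1'

end ChainSec
section StraddleSec

open Finset

variable {n k : ℕ} {E : ℕ → Finset (Fin n)}

/-- the trace of `G` in the window above its base index -/
noncomputable def relF (E : ℕ → Finset (Fin n)) (k : ℕ) (G : Finset (Fin n)) :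
    Finset (Fin (k-1)) :=
  Finset.univ.filter (fun s : Fin (k-1) => ∃ a ∈ G, lev E a = bIdx E G + 2 + (s:ℕ))

lemma lev_ne_bIdx_add_one (hE : NiceC E) {G : Finset (Fin n)} {a : Fin n}
    (ha : a ∈ G) : lev E a ≠ bIdx E G + 1 := by
  intro hl
  set b := bIdx E G with hb
  have hsub : E (b + 1) ⊆ G := by
    intro x hx
    by_cases hxb : x ∈ E b
    · exact (bIdx_spec G hE).2 hxb
    · have hx1 : x ∈ E (b+1) \ E b := Finset.mem_sdiff.mpr ⟨hx, hxb⟩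
      have ha1 : a ∈ E (b+1) \ E b := by
        rw [Finset.mem_sdiff]
        constructor
        · rw [← hl]; exact lev_spec a hE
        · exact not_mem_of_lt_lev a (by omega)
      have := Finset.card_le_one.mp (E_diff_card hE b) x hx1 a ha1
      rwa [this]
  have hn : b + 1 ≤ n := by rw [← hl]; exact lev_le_n a hE
  have := le_bIdx G hn hsub
  omega

lemma mem_iff_recon (hE : NiceC E) (hk : 2 ≤ k) {G : Finset (Fin n)}
    (hG : memIC E k G) (a : Fin n) :
    a ∈ G ↔ (lev E a ≤ bIdx E G ∨
      ∃ s : Fin (k-1), s ∈ relF E k G ∧ lev E a = bIdx E G + 2 + (s:ℕ)) := by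
  set b := bIdx E G with hb
  constructor
  · intro ha
    by_cases hl : lev E a ≤ b
    · exact Or.inl hl
    · refine Or.inr ?_
      have hne := lev_ne_bIdx_add_one hE ha
      have hup : lev E a ≤ b + k := lev_le a (memIC_subset G hE hG ha)
      have hs : lev E a - b - 2 < k - 1 := by omega
      refine ⟨⟨lev E a - b - 2, hs⟩, ?_, by simp; omega⟩
      rw [relF, Finset.mem_filter]
      exact ⟨Finset.mem_univ _, ⟨a, ha, by simp; omega⟩⟩
  · rintro (hl | ⟨s, hs, hlev⟩)
    · exact (bIdx_spec G hE).2 ((mem_iff_lev_le a hE).mpr hl)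
    · rw [relF, Finset.mem_filter] at hs
      obtain ⟨-, a', ha', hleva'⟩ := hs
      have : a = a' := eq_of_lev_eq hE (by omega)
      rwa [this]

lemma straddle_card (hE : NiceC E) (hk : 2 ≤ k) (c0 p : ℕ) (S : Finset (Finset (Fin n)))
    (hIC : ∀ G ∈ S, memIC E k G) (h1 : ∀ G ∈ S, ¬ E p ⊆ G)
    (h2 : ∀ G ∈ S, p + c0 ≤ tIdx E G) :
    S.card ≤ ∑ d ∈ Finset.range k, (2^(k-1) - 2^(min (d + c0 - 1) (k-1))) := by
  classical
  -- facts about members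
  have hblt : ∀ G ∈ S, bIdx E G < p := by
    intro G hG
    by_contra hc
    exact h1 G hG ((hE.1 (by omega)).trans (bIdx_spec G hE).2)
  have hwit : ∀ G ∈ S, ∃ s : Fin (k-1), s ∈ relF E k G ∧
      (p - 1 - bIdx E G) + c0 ≤ (s:ℕ) + 1 := by
    intro G hG
    have hb := hblt G hG
    have htb := tIdx_le_bIdx_add G hE (hIC G hG)
    have ht := h2 G hG
    have hGn : ¬ G ⊆ E (p + c0 - 1) := by
      intro hcon
      have := tIdx_le G hcon
      omega
    obtain ⟨a, ha, hna⟩ := Finset.not_subset.mp hGn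
    have hlev : p + c0 ≤ lev E a := by
      by_contra hc
      exact hna ((mem_iff_lev_le a hE).mpr (by omega))
    rcases (mem_iff_recon hE hk (hIC G hG) a).mp ha with hl | ⟨s, hsrel, hslev⟩
    · omega
    · exact ⟨s, hsrel, by omega⟩
  -- the injection
  have hinj : ∀ G ∈ S, ∀ G' ∈ S, bIdx E G = bIdx E G' → relF E k G = relF E k G' → G = G' := by
    intro G hG G' hG' hbeq hreleq
    ext a
    rw [mem_iff_recon hE hk (hIC G hG) a, mem_iff_recon hE hk (hIC G' hG') a, hbeq, hreleq]
  calc S.card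
      ≤ ((Finset.range k).sigma (fun d => Finset.univ.filter
          (fun R : Finset (Fin (k-1)) => ∃ s ∈ R, d + c0 ≤ (s:ℕ) + 1))).card := by
        apply Finset.card_le_card_of_injOn
          (fun G => (⟨p - 1 - bIdx E G, relF E k G⟩ : (_ : ℕ) × Finset (Fin (k-1))))
        · intro G hG
          rw [Finset.mem_coe, Finset.mem_sigma]
          obtain ⟨s, hsrel, hsle⟩ := hwit G hG
          refine ⟨?_, ?_⟩
          · rw [Finset.mem_range]
            show p - 1 - bIdx E G < k
            have := hblt G hG
            have := tIdx_le_bIdx_add G hE (hIC G hG)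
            have := h2 G hG
            omega
          · rw [Finset.mem_filter]
            exact ⟨Finset.mem_univ _, s, hsrel, hsle⟩
        · intro G hG G' hG' heq
          simp only [Sigma.mk.inj_iff, heq_eq_eq] at heq
          have hb : bIdx E G = bIdx E G' := by
            have := hblt G (by exact hG)
            have := hblt G' (by exact hG')
            omega
          exact hinj G hG G' hG' hb heq.2
    _ = ∑ d ∈ Finset.range k, (2^(k-1) - 2^(min (d + c0 - 1) (k-1))) := by
        rw [Finset.card_sigma]
        apply Finset.sum_congr rfl
        intro d hd
        exact GMTaux.card_filter_exists (k-1) (d + c0)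

lemma straddle_bound0 (hE : NiceC E) (hk : 2 ≤ k) (p : ℕ) (S : Finset (Finset (Fin n)))
    (hIC : ∀ G ∈ S, memIC E k G) (h1 : ∀ G ∈ S, ¬ E p ⊆ G)
    (h2 : ∀ G ∈ S, p ≤ tIdx E G) :
    S.card ≤ (k-1) * 2^(k-1) := by
  have h := straddle_card hE hk 0 p S hIC h1 (fun G hG => by have := h2 G hG; omega)
  have hsum : ∑ d ∈ Finset.range k, (2^(k-1) - 2^(min (d + 0 - 1) (k-1)))
      = (k-1) * 2^(k-1) := by
    have hmin : ∀ d ∈ Finset.range k, min (d + 0 - 1) (k-1) = d - 1 := by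
      intro d hd; rw [Finset.mem_range] at hd; omega
    rw [Finset.sum_congr rfl (fun d hd => by rw [hmin d hd])]
    rw [Finset.sum_tsub_distrib _ (fun d hd => by
      apply Nat.pow_le_pow_right (by norm_num)
      rw [Finset.mem_range] at hd; omega)]
    rw [Finset.sum_const, Finset.card_range, smul_eq_mul]
    have hgeo : ∑ d ∈ Finset.range k, 2^(d-1) = 2^(k-1) := by
      obtain ⟨k', rfl⟩ : ∃ k', k = k' + 1 := ⟨k - 1, by omega⟩
      rw [Finset.sum_range_succ']
      simp only [Nat.add_sub_cancel, Nat.zero_sub, pow_zero]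
      rw [GMTaux.sum_two_pow]
      have h5 : 1 ≤ 2^k' := Nat.one_le_two_pow
      omega
    rw [hgeo, Nat.sub_one_mul, Nat.mul_comm]
  omega

lemma straddle_bound1 (hE : NiceC E) (hk : 2 ≤ k) (p : ℕ) (S : Finset (Finset (Fin n)))
    (hIC : ∀ G ∈ S, memIC E k G) (h1 : ∀ G ∈ S, ¬ E p ⊆ G)
    (h2 : ∀ G ∈ S, p + 1 ≤ tIdx E G) :
    S.card ≤ (k-2) * 2^(k-1) + 1 := by
  have h := straddle_card hE hk 1 p S hIC h1 h2
  have hsum : ∑ d ∈ Finset.range k, (2^(k-1) - 2^(min (d + 1 - 1) (k-1)))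
      ≤ (k-2) * 2^(k-1) + 1 := by
    have hmin : ∀ d ∈ Finset.range k, min (d + 1 - 1) (k-1) = d := by
      intro d hd; rw [Finset.mem_range] at hd; omega
    rw [Finset.sum_congr rfl (fun d hd => by rw [hmin d hd])]
    rw [Finset.sum_tsub_distrib _ (fun d hd => by
      apply Nat.pow_le_pow_right (by norm_num)
      rw [Finset.mem_range] at hd; omega)]
    rw [Finset.sum_const, Finset.card_range, smul_eq_mul, GMTaux.sum_two_pow]
    obtain ⟨j, rfl⟩ : ∃ j, k = j + 2 := ⟨k - 2, by omega⟩
    have e1 : j + 2 - 1 = j + 1 := by omega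
    have e2 : j + 2 - 2 = j := by omega
    rw [e1, e2, pow_succ]
    have e3 : (j+2) * (2^j * 2) = j * (2^j * 2) + 2^j * 4 := by ring
    have e4 : 2^(j+2) = 2^j * 4 := by ring
    rw [e3, e4]
    have : 1 ≤ 2^j := Nat.one_le_two_pow
    omega
  omega

end StraddleSec
section CutSec

open Finset

variable {n k : ℕ} {E : ℕ → Finset (Fin n)}

lemma arith1 (hk : 2 ≤ k) : (k-1) * 2^(k-1) ≤ (3*k-5) * 2^(k-2) + 1 := by
  obtain ⟨j, rfl⟩ : ∃ j, k = j + 2 := ⟨k - 2, by omega⟩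
  have e1 : j + 2 - 1 = j + 1 := by omega
  have e2 : j + 2 - 2 = j := by omega
  have e3 : 3 * (j + 2) - 5 = 3 * j + 1 := by omega
  rw [e1, e2, e3]
  rcases Nat.eq_zero_or_pos j with rfl | hj
  · norm_num
  · rw [pow_succ]
    have h1 : (j + 1) * (2 ^ j * 2) = (2 * j + 2) * 2 ^ j := by ring
    rw [h1]
    have h2 : (2 * j + 2) * 2 ^ j ≤ (3 * j + 1) * 2 ^ j :=
      Nat.mul_le_mul_right _ (by omega)
    omega

lemma arith2 (hk : 2 ≤ k) : (k-2) * 2^(k-1) + 1 ≤ (3*k-5) * 2^(k-2) := by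
  obtain ⟨j, rfl⟩ : ∃ j, k = j + 2 := ⟨k - 2, by omega⟩
  have e1 : j + 2 - 1 = j + 1 := by omega
  have e2 : j + 2 - 2 = j := by omega
  have e3 : 3 * (j + 2) - 5 = 3 * j + 1 := by omega
  rw [e1, e2, e3, pow_succ]
  have h1 : j * (2 ^ j * 2) = 2 * j * 2 ^ j := by ring
  have h2 : (3 * j + 1) * 2 ^ j = 2 * j * 2 ^ j + (j + 1) * 2 ^ j := by ring
  rw [h1, h2]
  have h3 : 0 < (j + 1) * 2 ^ j := by positivity
  omega

lemma cut_assemble (p c : ℕ) (S B : Finset (Finset (Fin n))) (hB : B ⊆ S)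
    (hD : ((S \ B).filter (fun G => ¬ E p ⊆ G)).card ≤ c) :
    S.card ≤ ((S.filter (fun G => E p ⊆ G)) \ B).card + B.card + c := by
  classical
  have h1 : (S \ B).card = S.card - B.card := Finset.card_sdiff_of_subset hB
  have h2 : B.card ≤ S.card := Finset.card_le_card hB
  have h3 := Finset.card_filter_add_card_filter_not
    (s := S \ B) (p := fun G => E p ⊆ G)
  have h4 : (S \ B).filter (fun G => E p ⊆ G) = (S.filter (fun G => E p ⊆ G)) \ B := by
    ext G
    simp only [mem_filter, mem_sdiff]
    tauto
  rw [h4] at h3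
  omega

lemma cut_lemma (hE : NiceC E) (hk : 2 ≤ k)
    (S : Finset (Finset (Fin n))) (hS : ∀ G ∈ S, memIC E k G)
    (t : ℕ) (ht : 1 ≤ t) (htS : t ≤ S.card) :
    ∃ (p : ℕ) (B : Finset (Finset (Fin n))), B ⊆ S ∧ B.card = t ∧ (∀ G ∈ B, G ⊆ E p) ∧
      S.card ≤ ((S.filter (fun G => E p ⊆ G)) \ B).card + t + (3*k-5)*2^(k-2) := by
  classical
  obtain ⟨B₀, hB₀mem, hmin⟩ := Finset.exists_min_image (S.powersetCard t)
    (fun B => ∑ G ∈ B, tIdx E G) (Finset.powersetCard_nonempty.mpr htS)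
  rw [Finset.mem_powersetCard] at hB₀mem
  obtain ⟨hB₀S, hB₀card⟩ := hB₀mem
  have hswap : ∀ G ∈ B₀, ∀ G' ∈ S, G' ∉ B₀ → tIdx E G ≤ tIdx E G' := by
    intro G hG G' hG' hG'n
    by_contra hc
    push_neg at hc
    have hG'e : G' ∉ B₀.erase G := fun h => hG'n (Finset.mem_of_mem_erase h)
    have hmem1 : insert G' (B₀.erase G) ∈ S.powersetCard t := by
      rw [Finset.mem_powersetCard]
      constructor
      · exact Finset.insert_subset hG' ((Finset.erase_subset _ _).trans hB₀S)
      · rw [Finset.card_insert_of_notMem hG'e, Finset.card_erase_of_mem hG]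
        have : 1 ≤ B₀.card := by rw [hB₀card]; exact ht
        omega
    have hsum1 : ∑ G'' ∈ insert G' (B₀.erase G), tIdx E G''
        = tIdx E G' + ∑ G'' ∈ B₀.erase G, tIdx E G'' := Finset.sum_insert hG'e
    have hsum0 : tIdx E G + ∑ G'' ∈ B₀.erase G, tIdx E G'' = ∑ G'' ∈ B₀, tIdx E G'' :=
      Finset.add_sum_erase B₀ _ hG
    have := hmin _ hmem1
    omega
  have hB₀ne : B₀.Nonempty := Finset.card_pos.mp (by omega)
  obtain ⟨Gt, hGtB, hGtmax⟩ := Finset.exists_max_image B₀ (fun G => tIdx E G) hB₀ne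
  set p := tIdx E Gt with hp
  have hBsub : ∀ G ∈ B₀, G ⊆ E p := fun G hG => subset_of_tIdx_le G hE (hGtmax G hG)
  have hout : ∀ G' ∈ S, G' ∉ B₀ → p ≤ tIdx E G' := fun G' h1 h2 => hswap Gt hGtB G' h1 h2
  have hGtS : Gt ∈ S := hB₀S hGtB
  by_cases hsp : Gt = E p
  · -- Gt is the spine set E p
    by_cases hW : ∃ W ∈ S, W ∉ B₀ ∧ tIdx E W = p
    · -- case B1
      obtain ⟨W, hWS, hWn, hWt⟩ := hW
      have hWnB : W ∉ B₀.erase Gt := fun h => hWn (Finset.mem_of_mem_erase h)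
      set B := insert W (B₀.erase Gt) with hB
      have hBS : B ⊆ S := Finset.insert_subset hWS ((Finset.erase_subset _ _).trans hB₀S)
      have hBcard : B.card = t := by
        rw [hB, Finset.card_insert_of_notMem hWnB, Finset.card_erase_of_mem hGtB]
        omega
      have hBp : ∀ G ∈ B, G ⊆ E p := by
        intro G hG
        rcases Finset.mem_insert.mp hG with rfl | hG'
        · exact subset_of_tIdx_le G hE (le_of_eq hWt)
        · exact hBsub G (Finset.mem_of_mem_erase hG')
      -- bound the discarded part
      set D := (S \ B).filter (fun G => ¬ E p ⊆ G) with hD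
      have hWD : W ∉ D := by
        intro h
        rw [hD, Finset.mem_filter, Finset.mem_sdiff] at h
        exact h.1.2 (Finset.mem_insert_self _ _)
      have hDfacts : ∀ G ∈ D, G ∈ S ∧ G ∉ B₀ ∧ ¬ E p ⊆ G := by
        intro G hG
        rw [hD, Finset.mem_filter, Finset.mem_sdiff] at hG
        obtain ⟨⟨hGS, hGB⟩, hGp⟩ := hG
        refine ⟨hGS, ?_, hGp⟩
        intro hGB₀
        have : G = Gt := by
          by_contra hne
          exact hGB (Finset.mem_insert_of_mem (Finset.mem_erase.mpr ⟨hne, hGB₀⟩))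
        rw [this, hsp] at hGp
        exact hGp (Finset.Subset.refl _)
      have hWstr : ¬ E p ⊆ W := by
        intro hc
        have : W = E p := Finset.Subset.antisymm (subset_of_tIdx_le W hE (le_of_eq hWt)) hc
        rw [← hsp] at this
        exact hWn (this ▸ hGtB)
      have hstr := straddle_bound0 hE hk p (insert W D)
        (by
          intro G hG
          rcases Finset.mem_insert.mp hG with rfl | hG'
          · exact hS G hWS
          · exact hS G (hDfacts G hG').1)
        (by
          intro G hG
          rcases Finset.mem_insert.mp hG with rfl | hG'
          · exact hWstr
          · exact (hDfacts G hG').2.2)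
        (by
          intro G hG
          rcases Finset.mem_insert.mp hG with rfl | hG'
          · exact le_of_eq hWt.symm
          · exact hout G (hDfacts G hG').1 (hDfacts G hG').2.1)
      rw [Finset.card_insert_of_notMem hWD] at hstr
      have harith := arith1 (k := k) hk
      have hDle : D.card ≤ (3*k-5)*2^(k-2) := by omega
      have hasm := cut_assemble p ((3*k-5)*2^(k-2)) S B hBS hDle
      exact ⟨p, B, hBS, hBcard, hBp, by omega⟩
    · -- case B2
      push_neg at hW
      set D := (S \ B₀).filter (fun G => ¬ E p ⊆ G) with hD
      have hDfacts : ∀ G ∈ D, G ∈ S ∧ G ∉ B₀ ∧ ¬ E p ⊆ G := by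
        intro G hG
        rw [hD, Finset.mem_filter, Finset.mem_sdiff] at hG
        exact ⟨hG.1.1, hG.1.2, hG.2⟩
      have hstr := straddle_bound1 hE hk p D
        (fun G hG => hS G (hDfacts G hG).1)
        (fun G hG => (hDfacts G hG).2.2)
        (by
          intro G hG
          have h1 := hout G (hDfacts G hG).1 (hDfacts G hG).2.1
          have h2 := hW G (hDfacts G hG).1 (hDfacts G hG).2.1
          omega)
      have harith := arith2 (k := k) hk
      have hDle : D.card ≤ (3*k-5)*2^(k-2) := by omega
      have hasm := cut_assemble p ((3*k-5)*2^(k-2)) S B₀ hB₀S hDle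
      exact ⟨p, B₀, hB₀S, hB₀card, hBsub, by omega⟩
  · -- case A : Gt is not the spine set
    set D := (S \ B₀).filter (fun G => ¬ E p ⊆ G) with hD
    have hGtD : Gt ∉ D := by
      intro h
      rw [hD, Finset.mem_filter, Finset.mem_sdiff] at h
      exact h.1.2 hGtB
    have hDfacts : ∀ G ∈ D, G ∈ S ∧ G ∉ B₀ ∧ ¬ E p ⊆ G := by
      intro G hG
      rw [hD, Finset.mem_filter, Finset.mem_sdiff] at hG
      exact ⟨hG.1.1, hG.1.2, hG.2⟩
    have hGtstr : ¬ E p ⊆ Gt := by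
      intro hc
      exact hsp (Finset.Subset.antisymm (tIdx_spec Gt hE) hc)
    have hstr := straddle_bound0 hE hk p (insert Gt D)
      (by
        intro G hG
        rcases Finset.mem_insert.mp hG with rfl | hG'
        · exact hS G hGtS
        · exact hS G (hDfacts G hG').1)
      (by
        intro G hG
        rcases Finset.mem_insert.mp hG with rfl | hG'
        · exact hGtstr
        · exact (hDfacts G hG').2.2)
      (by
        intro G hG
        rcases Finset.mem_insert.mp hG with rfl | hG'
        · exact le_rfl
        · exact hout G (hDfacts G hG').1 (hDfacts G hG').2.1)
    rw [Finset.card_insert_of_notMem hGtD] at hstr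
    have harith := arith1 (k := k) hk
    have hDle : D.card ≤ (3*k-5)*2^(k-2) := by omega
    have hasm := cut_assemble p ((3*k-5)*2^(k-2)) S B₀ hB₀S hDle
    exact ⟨p, B₀, hB₀S, hB₀card, hBsub, by omega⟩

end CutSec
section EmbedSec

open Finset

lemma exists_injOn_of_card_le {α β : Type*} [DecidableEq α] (T : Finset α) (S : Finset β)
    (hc : T.card ≤ S.card) (b₀ : β) :
    ∃ φ : α → β, Set.InjOn φ ↑T ∧ ∀ x ∈ T, φ x ∈ S := by
  classical
  refine ⟨fun x => if hx : x ∈ T then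
      ((S.equivFin.symm (Fin.castLE hc (T.equivFin ⟨x, hx⟩))) : β) else b₀, ?_, ?_⟩
  · intro x hx y hy hxy
    rw [Finset.mem_coe] at hx hy
    simp only [dif_pos hx, dif_pos hy] at hxy
    have h1 := Subtype.coe_injective hxy
    have h2 := S.equivFin.symm.injective h1
    have h3 := Fin.castLE_injective hc h2
    have h4 := T.equivFin.injective h3
    exact congrArg Subtype.val h4
  · intro x hx
    simp only [dif_pos hx]
    exact (S.equivFin.symm _).2

variable {P : Type*} [PartialOrder P]

lemma exists_minimal_below (T : Finset P) (x : P) (hx : x ∈ T) :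
    ∃ z ∈ T, z ≤ x ∧ ∀ y ∈ T, y ≤ z → y = z := by
  classical
  obtain ⟨z, hz, hzmin'⟩ := Finset.exists_minimal (s := T.filter (· ≤ x)) ⟨x, by simp [hx]⟩
  have hz : z ∈ T.filter (· ≤ x) := hz
  have hzmin : ∀ y ∈ T.filter (· ≤ x), ¬ y < z :=
    fun y hy hlt => lt_irrefl y (lt_of_lt_of_le hlt (hzmin' hy hlt.le))
  rw [Finset.mem_filter] at hz
  refine ⟨z, hz.1, hz.2, ?_⟩
  intro y hy hyz
  have hyf : y ∈ T.filter (· ≤ x) := Finset.mem_filter.mpr ⟨hy, hyz.trans hz.2⟩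
  have hnlt := hzmin y hyf
  by_contra hne
  exact hnlt (lt_of_le_of_ne hyz hne)

end EmbedSec
section EmbedMain

open Finset

variable {n k : ℕ} {E : ℕ → Finset (Fin n)} {P : Type*} [PartialOrder P]

lemma embed_lemma (hE : NiceC E) (hk : 2 ≤ k) :
    ∀ h : ℕ, 1 ≤ h → ∀ T : Finset P,
      (∀ s : Finset P, s ⊆ T → IsChain (· ≤ ·) (s : Set P) → s.card ≤ h) →
      ∀ S : Finset (Finset (Fin n)), (∀ G ∈ S, memIC E k G) →
      T.card + (3*k-5)*2^(k-2) * (h - 1) ≤ S.card →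
      ∃ φ : P → Finset (Fin n), Set.InjOn φ ↑T ∧ (∀ x ∈ T, φ x ∈ S) ∧
        ∀ x y : P, x ∈ T → y ∈ T → x ≤ y → φ x ⊆ φ y := by
  intro h
  induction h with
  | zero => intro h1; exact absurd h1 (by norm_num)
  | succ h ih =>
    intro _ T hchain S hIC hcard
    classical
    rcases Nat.eq_zero_or_pos h with rfl | hpos
    · -- height 1 : T is an antichain
      have hrel : ∀ x ∈ T, ∀ y ∈ T, x ≤ y → x = y := by
        intro x hx y hy hxy
        by_contra hne
        have hpair : ({x, y} : Finset P) ⊆ T := by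
          intro z hz
          rcases Finset.mem_insert.mp hz with rfl | hz
          · exact hx
          · rw [Finset.mem_singleton] at hz; rw [hz]; exact hy
        have hchain2 : IsChain (· ≤ ·) (({x, y} : Finset P) : Set P) := by
          rw [Finset.coe_insert, Finset.coe_singleton]
          exact IsChain.insert (Set.Subsingleton.isChain (Set.subsingleton_singleton))
            (fun b hb _ => by rw [Set.mem_singleton_iff] at hb; rw [hb]; exact Or.inl hxy)
        have hc2 := hchain _ hpair hchain2
        rw [Finset.card_pair hne] at hc2
        omega
      obtain ⟨φ, hinj, hmem⟩ := exists_injOn_of_card_le T S (by simpa using hcard) ∅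
      exact ⟨φ, hinj, hmem, fun x y hx hy hxy => by rw [hrel x hx y hy hxy]⟩
    · -- inductive step
      rcases T.eq_empty_or_nonempty with rfl | ⟨x₀, hx₀⟩
      · exact ⟨fun _ => ∅, by simp, by simp, by simp⟩
      set L := T.filter (fun x => ∀ y ∈ T, y ≤ x → y = x) with hLdef
      have hLsub : L ⊆ T := Finset.filter_subset _ _
      have hLne : L.Nonempty := by
        obtain ⟨z, hz, hzx, hzmin⟩ := exists_minimal_below T x₀ hx₀
        exact ⟨z, Finset.mem_filter.mpr ⟨hz, hzmin⟩⟩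
      set t := L.card with htdef
      have ht1 : 1 ≤ t := Finset.card_pos.mpr hLne
      have htT : t ≤ T.card := Finset.card_le_card hLsub
      obtain ⟨p, B, hBS, hBcard, hBp, hcut⟩ := cut_lemma hE hk S hIC t ht1
        (le_trans (htT.trans (Nat.le_add_right _ _)) hcard)
      set TS := (S.filter (fun G => E p ⊆ G)) \ B with hTSdef
      set T' := T \ L with hT'def
      have hchain' : ∀ s : Finset P, s ⊆ T' → IsChain (· ≤ ·) (s : Set P) → s.card ≤ h := by
        intro s hsub hch
        rcases s.eq_empty_or_nonempty with rfl | hsne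
        · simp
        · obtain ⟨m, hm, hmmin'⟩ := Finset.exists_minimal hsne
          have hm : m ∈ s := hm
          have hmmin : ∀ y ∈ s, ¬ y < m :=
            fun y hy hlt => lt_irrefl y (lt_of_lt_of_le hlt (hmmin' hy hlt.le))
          have hmle : ∀ w ∈ s, m ≤ w := by
            intro w hw
            by_cases hwm : w = m
            · rw [hwm]
            · rcases hch (Finset.mem_coe.mpr hm) (Finset.mem_coe.mpr hw) (fun hc => hwm hc.symm) with h1 | h1
              · exact h1
              · exact absurd (lt_of_le_of_ne h1 hwm) (hmmin w hw)
          have hmT' : m ∈ T' := hsub hm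
          have hmT : m ∈ T := (Finset.mem_sdiff.mp hmT').1
          have hmL : m ∉ L := (Finset.mem_sdiff.mp hmT').2
          obtain ⟨z, hzT, hzm, hzmin⟩ := exists_minimal_below T m hmT
          have hzL : z ∈ L := Finset.mem_filter.mpr ⟨hzT, hzmin⟩
          have hzs : z ∉ s := fun hzs => (Finset.mem_sdiff.mp (hsub hzs)).2 hzL
          have hins : IsChain (· ≤ ·) ((insert z s : Finset P) : Set P) := by
            rw [Finset.coe_insert]
            apply hch.insert
            intro b hb _
            exact Or.inl (hzm.trans (hmle b hb))
          have hsubT : insert z s ⊆ T := Finset.insert_subset hzT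
            (hsub.trans (by rw [hT'def]; exact Finset.sdiff_subset))
          have hc3 := hchain _ hsubT hins
          rw [Finset.card_insert_of_notMem hzs] at hc3
          omega
      have hTSIC : ∀ G ∈ TS, memIC E k G := by
        intro G hG
        rw [hTSdef, Finset.mem_sdiff, Finset.mem_filter] at hG
        exact hIC G hG.1.1
      have hTScard : T'.card + (3*k-5)*2^(k-2) * (h - 1) ≤ TS.card := by
        have h1 : T'.card = T.card - t := by rw [hT'def, Finset.card_sdiff_of_subset hLsub]
        have h2 : (3*k-5)*2^(k-2) * (h+1-1) = (3*k-5)*2^(k-2) * (h-1) + (3*k-5)*2^(k-2) := by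
          have h3 : h + 1 - 1 = (h-1) + 1 := by omega
          rw [h3, Nat.mul_succ]
        omega
      obtain ⟨φ', hinj', hmem', hmono'⟩ := ih hpos T' hchain' TS hTSIC hTScard
      obtain ⟨ψ, hψinj, hψmem⟩ := exists_injOn_of_card_le L B (by omega) ∅
      have hdisj : ∀ x ∈ L, ∀ y, y ∈ T → y ∉ L → ψ x ≠ φ' y := by
        intro x hx y hyT hyL heq
        have h1 : ψ x ∈ B := hψmem x hx
        have h2 : φ' y ∈ TS := hmem' y (Finset.mem_sdiff.mpr ⟨hyT, hyL⟩)
        rw [hTSdef, Finset.mem_sdiff] at h2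
        rw [heq] at h1
        exact h2.2 h1
      refine ⟨fun x => if x ∈ L then ψ x else φ' x, ?_, ?_, ?_⟩
      · intro x hx y hy heq
        rw [Finset.mem_coe] at hx hy
        by_cases hxL : x ∈ L <;> by_cases hyL : y ∈ L
        · simp only [if_pos hxL, if_pos hyL] at heq
          exact hψinj (Finset.mem_coe.mpr hxL) (Finset.mem_coe.mpr hyL) heq
        · simp only [if_pos hxL, if_neg hyL] at heq
          exact absurd heq (hdisj x hxL y hy hyL)
        · simp only [if_neg hxL, if_pos hyL] at heq
          exact absurd heq.symm (hdisj y hyL x hx hxL)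
        · simp only [if_neg hxL, if_neg hyL] at heq
          exact hinj' (Finset.mem_coe.mpr (Finset.mem_sdiff.mpr ⟨hx, hxL⟩))
            (Finset.mem_coe.mpr (Finset.mem_sdiff.mpr ⟨hy, hyL⟩)) heq
      · intro x hx
        by_cases hxL : x ∈ L
        · simp only [if_pos hxL]
          exact hBS (hψmem x hxL)
        · simp only [if_neg hxL]
          have h2 : φ' x ∈ TS := hmem' x (Finset.mem_sdiff.mpr ⟨hx, hxL⟩)
          rw [hTSdef, Finset.mem_sdiff, Finset.mem_filter] at h2
          exact h2.1.1
      · intro x y hx hy hxy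
        by_cases hxL : x ∈ L <;> by_cases hyL : y ∈ L
        · have hxyeq : x = y := (Finset.mem_filter.mp hyL).2 x hx hxy
          rw [hxyeq]
        · simp only [if_pos hxL, if_neg hyL]
          have h1 : ψ x ⊆ E p := hBp _ (hψmem x hxL)
          have h2 : φ' y ∈ TS := hmem' y (Finset.mem_sdiff.mpr ⟨hy, hyL⟩)
          rw [hTSdef, Finset.mem_sdiff, Finset.mem_filter] at h2
          exact h1.trans h2.1.2
        · have : x = y := (Finset.mem_filter.mp hyL).2 x hx hxy
          rw [this] at hxL
          exact absurd hyL hxL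
        · simp only [if_neg hxL, if_neg hyL]
          exact hmono' x y (Finset.mem_sdiff.mpr ⟨hx, hxL⟩) (Finset.mem_sdiff.mpr ⟨hy, hyL⟩) hxy

end EmbedMain
section PermSec

open Finset

variable {n : ℕ}

def Eperm (σ : Equiv.Perm (Fin n)) (i : ℕ) : Finset (Fin n) :=
  univ.filter (fun a => (σ.symm a : ℕ) < i)

lemma Eperm_nice (σ : Equiv.Perm (Fin n)) : NiceC (Eperm σ) := by
  constructor
  · intro i j hij a ha
    rw [Eperm, Finset.mem_filter] at ha ⊢
    exact ⟨ha.1, by omega⟩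
  · intro i
    have himg : Eperm σ i = ((univ : Finset (Fin n)).filter (fun b : Fin n => (b:ℕ) < i)).image σ := by
      ext a
      rw [Eperm, Finset.mem_filter, Finset.mem_image]
      constructor
      · rintro ⟨-, h⟩
        exact ⟨σ.symm a, Finset.mem_filter.mpr ⟨Finset.mem_univ _, h⟩, σ.apply_symm_apply a⟩
      · rintro ⟨b, hb, rfl⟩
        rw [Finset.mem_filter] at hb
        rw [σ.symm_apply_apply]
        exact ⟨Finset.mem_univ _, hb.2⟩
    rw [himg, Finset.card_image_of_injective _ σ.injective, GMTaux.card_fin_lt]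

/-- build a permutation sending the positions in `U` to `F` (in order) and the rest to `Fᶜ`. -/
noncomputable def mkPerm (F U : Finset (Fin n)) (hU : U.card = F.card)
    (hUc : Uᶜ.card = n - F.card)
    (α : Fin F.card ≃ {a : Fin n // a ∈ F}) (γ : Fin (n - F.card) ≃ {a : Fin n // a ∉ F}) :
    Equiv.Perm (Fin n) :=
  (Equiv.sumCompl (· ∈ U)).symm.trans
    ((Equiv.sumCongr
        ((U.orderIsoOfFin hU).toEquiv.symm.trans α)
        (((Equiv.subtypeEquivRight (fun a => (Finset.mem_compl (s := U) (a := a)).symm)).trans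
            (Uᶜ.orderIsoOfFin hUc).toEquiv.symm).trans γ)).trans
      (Equiv.sumCompl (· ∈ F)))

lemma mkPerm_mem (F U : Finset (Fin n)) (hU : U.card = F.card) (hUc : Uᶜ.card = n - F.card)
    (α : Fin F.card ≃ {a : Fin n // a ∈ F}) (γ : Fin (n - F.card) ≃ {a : Fin n // a ∉ F})
    (a : Fin n) : mkPerm F U hU hUc α γ a ∈ F ↔ a ∈ U := by
  by_cases haU : a ∈ U
  · simp only [mkPerm, Equiv.trans_apply, Equiv.sumCompl_symm_apply_of_pos haU,
      Equiv.sumCongr_apply, Sum.map_inl, Equiv.sumCompl_apply_inl]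
    exact iff_of_true (Subtype.prop _) haU
  · simp only [mkPerm, Equiv.trans_apply, Equiv.sumCompl_symm_apply_of_neg haU,
      Equiv.sumCongr_apply, Sum.map_inr, Equiv.sumCompl_apply_inr]
    constructor
    · intro hmem
      exact absurd hmem (γ _).2
    · intro hmem
      exact absurd hmem haU

lemma mkPerm_apply_pos (F U : Finset (Fin n)) (hU : U.card = F.card) (hUc : Uᶜ.card = n - F.card)
    (α : Fin F.card ≃ {a : Fin n // a ∈ F}) (γ : Fin (n - F.card) ≃ {a : Fin n // a ∉ F})
    (t : Fin F.card) : mkPerm F U hU hUc α γ (↑((U.orderIsoOfFin hU) t)) = ↑(α t) := by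
  have haU : (↑((U.orderIsoOfFin hU) t) : Fin n) ∈ U := ((U.orderIsoOfFin hU) t).2
  simp only [mkPerm, Equiv.trans_apply, Equiv.sumCompl_symm_apply_of_pos haU,
    Equiv.sumCongr_apply, Sum.map_inl, Equiv.sumCompl_apply_inl]
  congr 1
  have : (⟨↑((U.orderIsoOfFin hU) t), haU⟩ : {a : Fin n // a ∈ U}) = (U.orderIsoOfFin hU) t :=
    Subtype.ext rfl
  rw [this]
  simp

lemma mkPerm_apply_neg (F U : Finset (Fin n)) (hU : U.card = F.card) (hUc : Uᶜ.card = n - F.card)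
    (α : Fin F.card ≃ {a : Fin n // a ∈ F}) (γ : Fin (n - F.card) ≃ {a : Fin n // a ∉ F})
    (r : Fin (n - F.card)) : mkPerm F U hU hUc α γ (↑((Uᶜ.orderIsoOfFin hUc) r)) = ↑(γ r) := by
  have haUc : (↑((Uᶜ.orderIsoOfFin hUc) r) : Fin n) ∈ Uᶜ := ((Uᶜ.orderIsoOfFin hUc) r).2
  have haU : (↑((Uᶜ.orderIsoOfFin hUc) r) : Fin n) ∉ U := Finset.mem_compl.mp haUc
  simp only [mkPerm, Equiv.trans_apply, Equiv.sumCompl_symm_apply_of_neg haU,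
    Equiv.sumCongr_apply, Sum.map_inr, Equiv.sumCompl_apply_inr]
  congr 1
  have h1 : (Equiv.subtypeEquivRight (fun a => (Finset.mem_compl (s := U) (a := a)).symm))
      ⟨↑((Uᶜ.orderIsoOfFin hUc) r), haU⟩ = (Uᶜ.orderIsoOfFin hUc) r := Subtype.ext rfl
  rw [h1]
  simp

end PermSec
section GoodSec

open Finset

variable {n : ℕ}

lemma compl_card (U : Finset (Fin n)) : Uᶜ.card = n - U.card := by
  rw [Finset.card_compl, Fintype.card_fin]

def UQ (k f : ℕ) (Q : Finset (Fin (k-1))) : Finset (Fin n) :=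
  univ.filter (fun a : Fin n => (a:ℕ) < f - Q.card ∨ ∃ s ∈ Q, (a:ℕ) = f - Q.card + 1 + (s:ℕ))

lemma Q_card_le {k : ℕ} (Q : Finset (Fin (k-1))) : Q.card ≤ k - 1 := by
  have h := Finset.card_le_univ Q
  rwa [Fintype.card_fin] at h

lemma UQ_card (k : ℕ) (hk : 2 ≤ k) (f : ℕ) (hf1 : k - 1 ≤ f) (hf2 : f + k ≤ n)
    (Q : Finset (Fin (k-1))) : (UQ (n := n) k f Q).card = f := by
  classical
  have hq : Q.card ≤ k - 1 := Q_card_le Q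
  set q := Q.card with hqdef
  rw [UQ, Finset.filter_or, Finset.card_union_of_disjoint (by
    rw [Finset.disjoint_left]
    intro a h1 h2
    rw [Finset.mem_filter] at h1 h2
    obtain ⟨s, hs, hse⟩ := h2.2
    omega)]
  have hleft : ((univ : Finset (Fin n)).filter (fun a : Fin n => (a:ℕ) < f - q)).card = f - q := by
    rw [GMTaux.card_fin_lt]
    omega
  have hg : ∀ s : Fin (k-1), f - q + 1 + (s:ℕ) < n := by
    intro s
    have := s.isLt
    omega
  have hright : ((univ : Finset (Fin n)).filter
      (fun a : Fin n => ∃ s ∈ Q, (a:ℕ) = f - q + 1 + (s:ℕ))).card = q := by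
    have himg : (univ : Finset (Fin n)).filter
        (fun a : Fin n => ∃ s ∈ Q, (a:ℕ) = f - q + 1 + (s:ℕ))
        = Q.image (fun s : Fin (k-1) => (⟨f - q + 1 + (s:ℕ), hg s⟩ : Fin n)) := by
      ext a
      rw [Finset.mem_filter, Finset.mem_image]
      constructor
      · rintro ⟨-, s, hs, hse⟩
        exact ⟨s, hs, by rw [Fin.ext_iff]; exact hse.symm⟩
      · rintro ⟨s, hs, rfl⟩
        exact ⟨Finset.mem_univ _, s, hs, rfl⟩
    rw [himg, Finset.card_image_of_injOn (fun s _ s' _ hss => by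
      rw [Fin.ext_iff] at hss
      simp only at hss
      exact Fin.ext (by omega))]
  rw [hleft, hright]
  omega

lemma UQ_inj (k : ℕ) (hk : 2 ≤ k) (f : ℕ) (hf1 : k - 1 ≤ f) (hf2 : f + k ≤ n)
    (Q Q' : Finset (Fin (k-1))) (h : UQ (n := n) k f Q = UQ (n := n) k f Q') : Q = Q' := by
  classical
  have hq := Q_card_le Q
  have hq' := Q_card_le Q'
  have hfn : f < n := by omega
  have hmemQ : ∀ (i : ℕ) (hi : i < n), (⟨i, hi⟩ : Fin n) ∈ UQ (n := n) k f Q ↔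
      (i < f - Q.card ∨ ∃ s ∈ Q, i = f - Q.card + 1 + (s:ℕ)) := by
    intro i hi
    rw [UQ, Finset.mem_filter]
    simp
  have hmemQ' : ∀ (i : ℕ) (hi : i < n), (⟨i, hi⟩ : Fin n) ∈ UQ (n := n) k f Q' ↔
      (i < f - Q'.card ∨ ∃ s ∈ Q', i = f - Q'.card + 1 + (s:ℕ)) := by
    intro i hi
    rw [UQ, Finset.mem_filter]
    simp
  -- first, the break points agree
  have hcc : Q.card = Q'.card := by
    by_contra hne
    rcases Nat.lt_or_ge (f - Q.card) (f - Q'.card) with hlt | hge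
    · -- f - Q.card ∉ UQ Q but ∈ UQ Q'
      have h1 : (⟨f - Q.card, by omega⟩ : Fin n) ∈ UQ (n := n) k f Q' :=
        (hmemQ' _ _).mpr (Or.inl hlt)
      rw [← h] at h1
      rw [hmemQ _ _] at h1
      rcases h1 with h1 | ⟨s, hs, hse⟩ <;> omega
    · have hlt2 : f - Q'.card ≤ f - Q.card := hge
      rcases Nat.eq_or_lt_of_le hlt2 with heq | hlt3
      · omega
      · have h1 : (⟨f - Q'.card, by omega⟩ : Fin n) ∈ UQ (n := n) k f Q :=
          (hmemQ _ _).mpr (Or.inl hlt3)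
        rw [h] at h1
        rw [hmemQ' _ _] at h1
        rcases h1 with h1 | ⟨s, hs, hse⟩ <;> omega
  -- then the sets agree
  ext s
  have hsn : f - Q.card + 1 + (s:ℕ) < n := by
    have := s.isLt
    omega
  constructor
  · intro hs
    have h1 : (⟨f - Q.card + 1 + (s:ℕ), hsn⟩ : Fin n) ∈ UQ (n := n) k f Q :=
      (hmemQ _ _).mpr (Or.inr ⟨s, hs, rfl⟩)
    rw [h] at h1
    rw [hmemQ' _ _] at h1
    rcases h1 with h1 | ⟨s', hs', hse⟩
    · omega
    · have : s = s' := Fin.ext (by omega)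
      rwa [this]
  · intro hs
    have h1 : (⟨f - Q.card + 1 + (s:ℕ), hsn⟩ : Fin n) ∈ UQ (n := n) k f Q' := by
      rw [hmemQ' _ _]
      exact Or.inr ⟨s, hs, by rw [hcc]⟩
    rw [← h] at h1
    rw [hmemQ _ _] at h1
    rcases h1 with h1 | ⟨s', hs', hse⟩
    · omega
    · have : s = s' := Fin.ext (by omega)
      rwa [this]

end GoodSec
section GoodSec2

open Finset Nat

variable {n : ℕ}

/-- the set of permutations whose interval chain contains `F`. -/
noncomputable def goodPerms (k : ℕ) (F : Finset (Fin n)) : Finset (Equiv.Perm (Fin n)) :=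
  @Finset.filter _ (fun σ => memIC (Eperm σ) k F) (Classical.decPred _) Finset.univ

lemma mem_goodPerms {k : ℕ} {F : Finset (Fin n)} (σ : Equiv.Perm (Fin n)) :
    σ ∈ goodPerms k F ↔ memIC (Eperm σ) k F := by
  simp [goodPerms]

lemma card_good_middle (k : ℕ) (hk : 2 ≤ k) (F : Finset (Fin n))
    (hf1 : k - 1 ≤ F.card) (hf2 : F.card + k ≤ n) :
    2^(k-1) * (F.card)! * (n - F.card)! ≤ (goodPerms k F).card := by
  classical
  have hcompl : Fintype.card {a : Fin n // a ∉ F} = n - F.card := by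
    rw [Fintype.card_subtype_compl, Fintype.card_fin, Fintype.card_coe]
  have hUcard : ∀ Q : Finset (Fin (k-1)), (UQ (n := n) k F.card Q).card = F.card :=
    fun Q => UQ_card k hk F.card hf1 hf2 Q
  have hUccard : ∀ Q : Finset (Fin (k-1)), (UQ (n := n) k F.card Q)ᶜ.card = n - F.card := by
    intro Q
    rw [compl_card, hUcard]
  -- the map
  set Φ : Finset (Fin (k-1)) × (Fin F.card ≃ {a : Fin n // a ∈ F}) ×
      (Fin (n - F.card) ≃ {a : Fin n // a ∉ F}) → Equiv.Perm (Fin n) :=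
    fun x => mkPerm F (UQ k F.card x.1) (hUcard x.1) (hUccard x.1) x.2.1 x.2.2 with hΦdef
  have hcardD : Fintype.card (Finset (Fin (k-1)) × (Fin F.card ≃ {a : Fin n // a ∈ F}) ×
      (Fin (n - F.card) ≃ {a : Fin n // a ∉ F})) = 2^(k-1) * (F.card)! * (n - F.card)! := by
    rw [Fintype.card_prod, Fintype.card_prod, Fintype.card_finset, Fintype.card_fin]
    rw [Fintype.card_equiv F.equivFin.symm]
    rw [Fintype.card_equiv (Fintype.equivFinOfCardEq hcompl).symm]
    rw [Fintype.card_fin, Fintype.card_fin, mul_assoc]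
  rw [← hcardD, ← Finset.card_univ]
  apply Finset.card_le_card_of_injOn Φ
  · -- maps into the good set
    intro x _
    rw [Finset.mem_coe, mem_goodPerms]
    set q := x.1.card with hqdef
    have hq : q ≤ k - 1 := Q_card_le x.1
    refine ⟨F.card - q, by omega, ?_, ?_⟩
    · intro a ha
      rw [Eperm, Finset.mem_filter] at ha
      have hb : (Φ x).symm a ∈ UQ (n := n) k F.card x.1 := by
        rw [UQ, Finset.mem_filter]
        exact ⟨Finset.mem_univ _, Or.inl ha.2⟩
      have := (mkPerm_mem F (UQ k F.card x.1) (hUcard x.1) (hUccard x.1) x.2.1 x.2.2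
        ((Φ x).symm a)).mpr hb
      rwa [Equiv.apply_symm_apply] at this
    · intro a ha
      rw [Eperm, Finset.mem_filter]
      refine ⟨Finset.mem_univ _, ?_⟩
      have hb : (Φ x).symm a ∈ UQ (n := n) k F.card x.1 := by
        rw [← mkPerm_mem F (UQ k F.card x.1) (hUcard x.1) (hUccard x.1) x.2.1 x.2.2
          ((Φ x).symm a)]
        rwa [Equiv.apply_symm_apply]
      rw [UQ, Finset.mem_filter] at hb
      rcases hb.2 with h1 | ⟨s, hs, hse⟩
      · omega
      · have := s.isLt
        omega
  · -- injectivity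
    rintro ⟨Q, α, γ⟩ - ⟨Q', α', γ'⟩ - heq
    simp only [hΦdef] at heq
    have hUeq : UQ (n := n) k F.card Q = UQ (n := n) k F.card Q' := by
      ext b
      rw [← mkPerm_mem F (UQ k F.card Q) (hUcard Q) (hUccard Q) α γ b,
        ← mkPerm_mem F (UQ k F.card Q') (hUcard Q') (hUccard Q') α' γ' b, heq]
    have hQeq : Q = Q' := UQ_inj k hk F.card hf1 hf2 Q Q' hUeq
    subst hQeq
    have hαeq : α = α' := by
      apply Equiv.ext
      intro t
      apply Subtype.coe_injective
      show ((α t : {a : Fin n // a ∈ F}) : Fin n) = ((α' t : {a : Fin n // a ∈ F}) : Fin n)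
      rw [← mkPerm_apply_pos F (UQ k F.card Q) (hUcard Q) (hUccard Q) α γ t,
        ← mkPerm_apply_pos F (UQ k F.card Q) (hUcard Q) (hUccard Q) α' γ' t, heq]
    have hγeq : γ = γ' := by
      apply Equiv.ext
      intro r
      apply Subtype.coe_injective
      show ((γ r : {a : Fin n // a ∉ F}) : Fin n) = ((γ' r : {a : Fin n // a ∉ F}) : Fin n)
      rw [← mkPerm_apply_neg F (UQ k F.card Q) (hUcard Q) (hUccard Q) α γ r,
        ← mkPerm_apply_neg F (UQ k F.card Q) (hUcard Q) (hUccard Q) α' γ' r, heq]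
    rw [hαeq, hγeq]

lemma card_good_all (k : ℕ) (hk2 : 2 ≤ k) (hkn : k ≤ n) (F : Finset (Fin n)) :
    (F.card)! * (n - F.card)! ≤ (goodPerms k F).card := by
  classical
  have hcompl : Fintype.card {a : Fin n // a ∉ F} = n - F.card := by
    rw [Fintype.card_subtype_compl, Fintype.card_fin, Fintype.card_coe]
  have hfn : F.card ≤ n := by
    have := Finset.card_le_univ F
    rwa [Fintype.card_fin] at this
  set U0 : Finset (Fin n) := univ.filter (fun a : Fin n => (a:ℕ) < F.card) with hU0def
  have hU0card : U0.card = F.card := by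
    rw [hU0def, GMTaux.card_fin_lt]
    omega
  have hU0c : U0ᶜ.card = n - F.card := by rw [compl_card, hU0card]
  set Φ : (Fin F.card ≃ {a : Fin n // a ∈ F}) ×
      (Fin (n - F.card) ≃ {a : Fin n // a ∉ F}) → Equiv.Perm (Fin n) :=
    fun x => mkPerm F U0 hU0card hU0c x.1 x.2 with hΦdef
  have hcardD : Fintype.card ((Fin F.card ≃ {a : Fin n // a ∈ F}) ×
      (Fin (n - F.card) ≃ {a : Fin n // a ∉ F})) = (F.card)! * (n - F.card)! := by
    rw [Fintype.card_prod]
    rw [Fintype.card_equiv F.equivFin.symm]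
    rw [Fintype.card_equiv (Fintype.equivFinOfCardEq hcompl).symm]
    rw [Fintype.card_fin, Fintype.card_fin]
  rw [← hcardD, ← Finset.card_univ]
  apply Finset.card_le_card_of_injOn Φ
  · intro x _
    rw [Finset.mem_coe, mem_goodPerms]
    refine ⟨min F.card (n - k), by omega, ?_, ?_⟩
    · intro a ha
      rw [Eperm, Finset.mem_filter] at ha
      have hb : (Φ x).symm a ∈ U0 := by
        rw [hU0def, Finset.mem_filter]
        refine ⟨Finset.mem_univ _, by omega⟩
      have := (mkPerm_mem F U0 hU0card hU0c x.1 x.2 ((Φ x).symm a)).mpr hb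
      rwa [Equiv.apply_symm_apply] at this
    · intro a ha
      rw [Eperm, Finset.mem_filter]
      refine ⟨Finset.mem_univ _, ?_⟩
      have hb : (Φ x).symm a ∈ U0 := by
        rw [← mkPerm_mem F U0 hU0card hU0c x.1 x.2 ((Φ x).symm a)]
        rwa [Equiv.apply_symm_apply]
      rw [hU0def, Finset.mem_filter] at hb
      have := ((Φ x).symm a).isLt
      omega
  · rintro ⟨α, γ⟩ - ⟨α', γ'⟩ - heq
    simp only [hΦdef] at heq
    have hαeq : α = α' := by
      apply Equiv.ext
      intro t
      apply Subtype.coe_injective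
      show ((α t : {a : Fin n // a ∈ F}) : Fin n) = ((α' t : {a : Fin n // a ∈ F}) : Fin n)
      rw [← mkPerm_apply_pos F U0 hU0card hU0c α γ t,
        ← mkPerm_apply_pos F U0 hU0card hU0c α' γ' t, heq]
    have hγeq : γ = γ' := by
      apply Equiv.ext
      intro r
      apply Subtype.coe_injective
      show ((γ r : {a : Fin n // a ∉ F}) : Fin n) = ((γ' r : {a : Fin n // a ∉ F}) : Fin n)
      rw [← mkPerm_apply_neg F U0 hU0card hU0c α γ r,
        ← mkPerm_apply_neg F U0 hU0card hU0c α' γ' r, heq]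
    rw [hαeq, hγeq]

end GoodSec2
section FinalSec

open Finset Nat

lemma exists_N_pow (c j : ℕ) : ∃ N, ∀ m ≥ N, c * m ^ j ≤ 2 ^ m := by
  have h := isLittleO_pow_const_const_pow_of_one_lt (R := ℝ) j (by norm_num : (1:ℝ) < 2)
  have h2 := (h.const_mul_left (c : ℝ)).def (by norm_num : (0:ℝ) < 1)
  rw [Filter.eventually_atTop] at h2
  obtain ⟨N, hN⟩ := h2
  refine ⟨N, fun m hm => ?_⟩
  have h3 := hN m hm
  rw [Real.norm_eq_abs, Real.norm_eq_abs, abs_of_nonneg (by positivity),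
    abs_of_nonneg (by positivity), one_mul] at h3
  exact_mod_cast h3

lemma two_pow_le_succ_mul_choose (n : ℕ) : 2 ^ n ≤ (n + 1) * n.choose (n / 2) := by
  calc 2 ^ n = ∑ i ∈ Finset.range (n + 1), n.choose i := (Nat.sum_range_choose n).symm
    _ ≤ ∑ _i ∈ Finset.range (n + 1), n.choose (n / 2) :=
        Finset.sum_le_sum (fun i _ => Nat.choose_le_middle i n)
    _ = (n + 1) * n.choose (n / 2) := by
        rw [Finset.sum_const, Finset.card_range, smul_eq_mul]

lemma good_lower {n : ℕ} (k : ℕ) (hk : 2 ≤ k) (hn1 : 2 * k ≤ n)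
    (hC : 2 ^ (k - 1) * n ^ (k - 1) ≤ n.choose (n / 2)) (F : Finset (Fin n)) :
    2 ^ (k - 1) * n ! ≤ (goodPerms k F).card * n.choose (n / 2) := by
  have hfn : F.card ≤ n := by
    have := Finset.card_le_univ F
    rwa [Fintype.card_fin] at this
  have hfact : n.choose F.card * (F.card)! * (n - F.card)! = n ! :=
    Nat.choose_mul_factorial_mul_factorial hfn
  by_cases hmid : k - 1 ≤ F.card ∧ F.card + k ≤ n
  · have h1 := card_good_middle k hk F hmid.1 hmid.2
    have h2 : n.choose F.card ≤ n.choose (n / 2) := Nat.choose_le_middle F.card n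
    calc 2 ^ (k - 1) * n ! = (2 ^ (k - 1) * (F.card)! * (n - F.card)!) * n.choose F.card := by
          rw [← hfact]; ring
      _ ≤ (goodPerms k F).card * n.choose (n / 2) := Nat.mul_le_mul h1 h2
  · have h1 := card_good_all k hk (by omega) F
    have hn0 : 1 ≤ n := by omega
    have hch : n.choose F.card ≤ n ^ (k - 1) := by
      rcases Nat.lt_or_ge F.card (k - 1) with hlow | hhigh
      · calc n.choose F.card ≤ n ^ F.card := Nat.choose_le_pow n F.card
          _ ≤ n ^ (k - 1) := Nat.pow_le_pow_right hn0 (by omega)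
      · have hhi : n - k + 1 ≤ F.card := by omega
        calc n.choose F.card = n.choose (n - F.card) := (Nat.choose_symm hfn).symm
          _ ≤ n ^ (n - F.card) := Nat.choose_le_pow n _
          _ ≤ n ^ (k - 1) := Nat.pow_le_pow_right hn0 (by omega)
    calc 2 ^ (k - 1) * n ! = ((F.card)! * (n - F.card)!) * (2 ^ (k - 1) * n.choose F.card) := by
          rw [← hfact]; ring
      _ ≤ (goodPerms k F).card * (2 ^ (k - 1) * n ^ (k - 1)) :=
          Nat.mul_le_mul h1 (Nat.mul_le_mul_left _ hch)
      _ ≤ (goodPerms k F).card * n.choose (n / 2) := Nat.mul_le_mul_left _ hC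

end FinalSec
section MainSec

open Finset Nat

noncomputable def famFilter {n : ℕ} (k : ℕ) (A : Finset (Finset (Fin n)))
    (σ : Equiv.Perm (Fin n)) : Finset (Finset (Fin n)) :=
  @Finset.filter _ (fun F => memIC (Eperm σ) k F) (Classical.decPred _) A

lemma mem_famFilter {n k : ℕ} {A : Finset (Finset (Fin n))} {σ : Equiv.Perm (Fin n)}
    {F : Finset (Fin n)} : F ∈ famFilter k A σ ↔ F ∈ A ∧ memIC (Eperm σ) k F := by
  simp [famFilter]

lemma swap_sum {n : ℕ} (k : ℕ) (A : Finset (Finset (Fin n))) :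
    ∑ σ ∈ (univ : Finset (Equiv.Perm (Fin n))), (famFilter k A σ).card
      = ∑ F ∈ A, (goodPerms k F).card := by
  classical
  have h1 : ∀ σ ∈ (univ : Finset (Equiv.Perm (Fin n))),
      (famFilter k A σ).card = ∑ _F ∈ famFilter k A σ, 1 :=
    fun σ _ => Finset.card_eq_sum_ones _
  rw [Finset.sum_congr rfl h1]
  rw [Finset.sum_comm' (s := (univ : Finset (Equiv.Perm (Fin n))))
    (t := fun σ => famFilter k A σ) (t' := A) (s' := fun F => goodPerms k F)
    (by
      intro σ F
      rw [mem_famFilter, mem_goodPerms]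
      constructor
      · rintro ⟨-, hF, hg⟩
        exact ⟨hg, hF⟩
      · rintro ⟨hg, hF⟩
        exact ⟨Finset.mem_univ _, hF, hg⟩)]
  exact Finset.sum_congr rfl (fun F _ => (Finset.card_eq_sum_ones _).symm)

end MainSec

/-- For any fixed poset `P` and fixed `k ≥ 2`, for all sufficiently large `n`, every
`P`-free family `𝒜 ⊆ 2^[n]` satisfies
`|𝒜| ≤ (1/2^{k-1})(|P| + (3k-5)2^{k-2}(h(P)-1) - 1)·C(n,⌊n/2⌋)`. -/
theorem La_upper_bound_interval_chain
    (P : Type*) [PartialOrder P] [Fintype P] (h k : ℕ) (hh : isHeight P h) (hk : 2 ≤ k) :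
    ∃ N : ℕ, ∀ n ≥ N, ∀ 𝒜 : Finset (Finset (Fin n)), ¬ containsWeak 𝒜 P →
      2 ^ (k - 1) * 𝒜.card ≤
        (Fintype.card P + (3 * k - 5) * 2 ^ (k - 2) * (h - 1) - 1) * n.choose (n / 2) := by
  classical
  obtain ⟨N₂, hN₂⟩ := exists_N_pow (2 ^ k) k
  refine ⟨N₂ + 2 * k + 1, fun n hn A hA => ?_⟩
  rcases isEmpty_or_nonempty P with hPe | hPne
  · exact absurd ⟨fun x => isEmptyElim x, fun x => isEmptyElim x,
      fun x => isEmptyElim x, fun x => isEmptyElim x⟩ hA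
  · have hm1 : 1 ≤ Fintype.card P := Fintype.card_pos
    have hh1 : 1 ≤ h := by
      obtain ⟨x⟩ := hPne
      have hc := hh.2 {x} (by
        rw [Finset.coe_singleton]
        exact Set.subsingleton_singleton.isChain)
      rwa [Finset.card_singleton] at hc
    have hn2k : 2 * k ≤ n := by omega
    have hC : 2 ^ (k - 1) * n ^ (k - 1) ≤ n.choose (n / 2) := by
      have hb := hN₂ n (by omega)
      have hp1 : 2 ^ (k-1) * n ^ (k-1) * (n+1) ≤ 2 ^ k * n ^ k := by
        have e1 : 2 ^ k = 2 ^ (k-1) * 2 := by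
          rw [← pow_succ]
          congr 1
          omega
        have e2 : n ^ k = n ^ (k-1) * n := by
          rw [← pow_succ]
          congr 1
          omega
        rw [e1, e2]
        calc 2^(k-1) * n^(k-1) * (n+1) ≤ 2^(k-1)*n^(k-1) * (2*n) := by
              apply Nat.mul_le_mul_left
              omega
          _ = 2^(k-1)*2*(n^(k-1)*n) := by ring
      have hq := two_pow_le_succ_mul_choose n
      have h5 : 2 ^ (k-1) * n ^ (k-1) * (n+1) ≤ n.choose (n/2) * (n+1) := by
        calc 2 ^ (k-1) * n ^ (k-1) * (n+1) ≤ 2^k * n^k := hp1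
          _ ≤ 2^n := hb
          _ ≤ (n+1) * n.choose (n/2) := hq
          _ = n.choose (n/2) * (n+1) := Nat.mul_comm _ _
      exact Nat.le_of_mul_le_mul_right h5 (by omega)
    have hbound : ∀ σ : Equiv.Perm (Fin n),
        (famFilter k A σ).card ≤ Fintype.card P + (3*k-5)*2^(k-2)*(h-1) - 1 := by
      intro σ
      by_contra hc
      push_neg at hc
      have hcard2 : Fintype.card P + (3*k-5)*2^(k-2)*(h-1) ≤ (famFilter k A σ).card := by
        omega
      obtain ⟨φ, hinj, hmem, hmono⟩ := embed_lemma (Eperm_nice σ) hk h hh1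
        (Finset.univ : Finset P) (fun s _ hch => hh.2 s hch) (famFilter k A σ)
        (fun G hG => (mem_famFilter.mp hG).2)
        (by rw [Finset.card_univ]; exact hcard2)
      apply hA
      refine ⟨φ, ?_, ?_, ?_⟩
      · intro a b hab
        exact hinj (by simp) (by simp) hab
      · intro x
        exact (mem_famFilter.mp (hmem x (Finset.mem_univ x))).1
      · intro x y hxy
        exact hmono x y (Finset.mem_univ x) (Finset.mem_univ y) hxy
    have hsum1 : ∑ σ ∈ (univ : Finset (Equiv.Perm (Fin n))), (famFilter k A σ).card
        ≤ (Fintype.card P + (3*k-5)*2^(k-2)*(h-1) - 1) * (Nat.factorial n) := by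
      calc ∑ σ ∈ (univ : Finset (Equiv.Perm (Fin n))), (famFilter k A σ).card
          ≤ ∑ _σ ∈ (univ : Finset (Equiv.Perm (Fin n))),
            (Fintype.card P + (3*k-5)*2^(k-2)*(h-1) - 1) :=
            Finset.sum_le_sum (fun σ _ => hbound σ)
        _ = _ := by
            rw [Finset.sum_const, smul_eq_mul, Finset.card_univ, Fintype.card_perm,
              Fintype.card_fin, Nat.mul_comm]
    have hsum2 : 2 ^ (k-1) * A.card * (Nat.factorial n)
        ≤ (∑ σ ∈ (univ : Finset (Equiv.Perm (Fin n))), (famFilter k A σ).card)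
            * n.choose (n/2) := by
      calc 2 ^ (k-1) * A.card * (Nat.factorial n) = ∑ _F ∈ A, 2^(k-1) * (Nat.factorial n) := by
            rw [Finset.sum_const, smul_eq_mul]
            ring
        _ ≤ ∑ F ∈ A, (goodPerms k F).card * n.choose (n/2) :=
            Finset.sum_le_sum (fun F _ => good_lower k hk hn2k hC F)
        _ = (∑ F ∈ A, (goodPerms k F).card) * n.choose (n/2) := by rw [← Finset.sum_mul]
        _ = _ := by rw [swap_sum k A]
    have hfin : (2^(k-1) * A.card) * (Nat.factorial n)
        ≤ ((Fintype.card P + (3*k-5)*2^(k-2)*(h-1) - 1) * n.choose (n/2)) * (Nat.factorial n) := by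
      calc (2^(k-1) * A.card) * (Nat.factorial n)
          ≤ (∑ σ ∈ (univ : Finset (Equiv.Perm (Fin n))), (famFilter k A σ).card)
            * n.choose (n/2) := hsum2
        _ ≤ ((Fintype.card P + (3*k-5)*2^(k-2)*(h-1) - 1) * (Nat.factorial n)) * n.choose (n/2) :=
            Nat.mul_le_mul_right _ hsum1
        _ = _ := by ring
    exact Nat.le_of_mul_le_mul_right hfin (Nat.factorial_pos n)
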